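/- Let (g = U' ⊕ V', B') be a nonzero Manin algebra over a field K of characteristic 0. If g is a nilpotent Lie algebra, then z(g) ∩ U' ≠ {0} and z(g) ∩ V' ≠ {0}, where z(g) denotes the centre of g. -/

import Mathlib

/-- Auxiliary: one half of the statement. -/
theorem stmt_15_aux (K : Type*) [Field K] [CharZero K]
    (g : Type*) [LieRing g] [LieAlgebra K g] [Module.Finite K g] [Nontrivial g]
    (B' : LinearMap.BilinForm K g)
    (hBnd : B'.Nondegenerate)
    (hBsymm : ∀ x y : g, B' x y = B' y x)
    (hBinv : ∀ x y z : g, B' ⁅x, y⁆ z = B' x ⁅y, z⁆)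
    (U' V' : LieSubalgebra K g)
    (hUV' : IsCompl U'.toSubmodule V'.toSubmodule)
    (hU'iso : ∀ x ∈ U', ∀ y ∈ U', B' x y = 0)
    (hV'iso : ∀ x ∈ V', ∀ y ∈ V', B' x y = 0)
    (hnilp : LieRing.IsNilpotent g) :
    ∃ x : g, x ∈ LieAlgebra.center K g ∧ x ∈ U' ∧ x ≠ 0 := by
  classical
  haveI : FiniteDimensional K g := ‹Module.Finite K g›
  set D : Submodule K g :=
    LieSubmodule.toSubmodule (LieModule.lowerCentralSeries K g g 1) with hD
  set W : Submodule K g := U'.toSubmodule ⊔ D with hWdef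
  -- Step A: W ≠ ⊤
  have hW : W ≠ ⊤ := by
    intro htop
    -- show U' ⊔ lcs k = ⊤ for all k
    have hk : ∀ k : ℕ,
        U'.toSubmodule ⊔ LieSubmodule.toSubmodule (LieModule.lowerCentralSeries K g g k) = ⊤ := by
      intro k
      induction k with
      | zero =>
        rw [LieModule.lowerCentralSeries_zero]
        simp
      | succ k ih =>
        rw [eq_top_iff, ← htop, hWdef]
        refine sup_le le_sup_left ?_
        -- D = lcs 1 ≤ U' ⊔ lcs (k+1)
        have h1 : LieModule.lowerCentralSeries K g g 1 = ⁅(⊤ : LieIdeal K g), (⊤ : LieIdeal K g)⁆ := by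
          rw [LieModule.lowerCentralSeries_succ, LieModule.lowerCentralSeries_zero]
        rw [hD, h1, LieSubmodule.lieIdeal_oper_eq_linear_span']
        rw [Submodule.span_le]
        rintro m ⟨x, -, y, -, rfl⟩
        -- decompose x and y via ih
        have hx : x ∈ U'.toSubmodule ⊔ LieSubmodule.toSubmodule (LieModule.lowerCentralSeries K g g k) := by
          rw [ih]; trivial
        have hy : y ∈ U'.toSubmodule ⊔ LieSubmodule.toSubmodule (LieModule.lowerCentralSeries K g g k) := by
          rw [ih]; trivial
        obtain ⟨a, ha, b, hb, rfl⟩ := Submodule.mem_sup.mp hx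
        obtain ⟨c, hc, d, hd, rfl⟩ := Submodule.mem_sup.mp hy
        have hmem : ∀ z : g, z ∈ LieModule.lowerCentralSeries K g g (k + 1) →
            z ∈ (U'.toSubmodule ⊔ LieSubmodule.toSubmodule (LieModule.lowerCentralSeries K g g (k + 1))) := by
          intro z hz
          exact Submodule.mem_sup_right hz
        have hbr : ∀ z : g, ⁅z, d⁆ ∈ LieModule.lowerCentralSeries K g g (k + 1) := by
          intro z
          rw [LieModule.lowerCentralSeries_succ]
          exact LieSubmodule.lie_mem_lie (LieSubmodule.mem_top z) hd
        have hbr' : ∀ z : g, ⁅b, z⁆ ∈ LieModule.lowerCentralSeries K g g (k + 1) := by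
          intro z
          have : ⁅b, z⁆ = -⁅z, b⁆ := by rw [lie_skew]
          rw [this]
          refine neg_mem ?_
          rw [LieModule.lowerCentralSeries_succ]
          exact LieSubmodule.lie_mem_lie (LieSubmodule.mem_top z) hb
        have : ⁅a + b, c + d⁆ = ⁅a, c⁆ + (⁅a, d⁆ + ⁅b, c + d⁆) := by
          rw [add_lie, lie_add]; abel
        rw [this]
        refine Submodule.add_mem _ (Submodule.mem_sup_left (U'.lie_mem ha hc)) ?_
        exact Submodule.add_mem _ (hmem _ (hbr a)) (hmem _ (hbr' (c + d)))
    obtain ⟨n, hn⟩ := (LieModule.isNilpotent_iff K g g).mp hnilp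
    have hUtop : U'.toSubmodule = ⊤ := by
      have := hk n
      rw [hn] at this
      simpa using this
    -- then V' = ⊥ and B' ≡ 0, contradiction with nondegeneracy and nontriviality
    have hall : ∀ x y : g, B' x y = 0 := by
      intro x y
      have hx : x ∈ U' := by rw [← LieSubalgebra.mem_toSubmodule, hUtop]; trivial
      have hy : y ∈ U' := by rw [← LieSubalgebra.mem_toSubmodule, hUtop]; trivial
      exact hU'iso x hx y hy
    obtain ⟨z, hz⟩ := exists_ne (0 : g)
    exact hz (hBnd.1 z (fun n => hall z n))
  -- Step B: find 0 ≠ x orthogonal to W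
  have hB : ∃ x : g, x ≠ 0 ∧ ∀ w ∈ W, B' w x = 0 := by
    set φ : g →ₗ[K] Module.Dual K W := W.subtype.dualMap ∘ₗ B'.flip with hφ
    by_cases hker : LinearMap.ker φ = ⊥
    · exfalso
      have hinj : Function.Injective φ := LinearMap.ker_eq_bot.mp hker
      have h1 : Module.finrank K g ≤ Module.finrank K (Module.Dual K W) :=
        LinearMap.finrank_le_finrank_of_injective hinj
      have h2 : Module.finrank K (Module.Dual K W) = Module.finrank K W :=
        Subspace.dual_finrank_eq
      have h3 : Module.finrank K W < Module.finrank K g :=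
        Submodule.finrank_lt hW
      omega
    · obtain ⟨x, hx, hx0⟩ := Submodule.ne_bot_iff _ |>.mp hker
      refine ⟨x, hx0, ?_⟩
      intro w hw
      have : φ x = 0 := hx
      have h2 := DFunLike.congr_fun this (⟨w, hw⟩ : W)
      simpa [hφ] using h2
  obtain ⟨x, hx0, hxW⟩ := hB
  -- Step C: x ∈ U'
  have hxg : x ∈ U'.toSubmodule ⊔ V'.toSubmodule := by
    rw [hUV'.sup_eq_top]; trivial
  obtain ⟨u, hu, v, hv, hxuv⟩ := Submodule.mem_sup.mp hxg
  have hv0 : v = 0 := by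
    refine hBnd.1 v ?_
    intro z
    have hzg : z ∈ U'.toSubmodule ⊔ V'.toSubmodule := by
      rw [hUV'.sup_eq_top]; trivial
    obtain ⟨p, hp, q, hq, rfl⟩ := Submodule.mem_sup.mp hzg
    have h1 : B' v p = 0 := by
      have hpx : B' p x = 0 := hxW p (Submodule.mem_sup_left hp)
      have : B' p v = B' p x - B' p u := by
        rw [← hxuv]; simp
      rw [hBsymm v p, this, hpx, hU'iso p hp u hu, sub_zero]
    have h2 : B' v q = 0 := hV'iso v hv q hq
    rw [map_add, h1, h2, add_zero]
  have hxU : x ∈ U' := by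
    rw [← hxuv, hv0, add_zero] at *
    exact hu
  -- Step D: x is central
  refine ⟨x, ?_, hxU, hx0⟩
  rw [LieModule.mem_maxTrivSubmodule]
  intro y
  refine hBnd.1 _ ?_
  intro z
  have h1 : ⁅y, x⁆ = -⁅x, y⁆ := by rw [lie_skew]
  rw [h1, map_neg, LinearMap.neg_apply, hBinv x y z, neg_eq_zero, hBsymm]
  refine hxW _ (Submodule.mem_sup_right ?_)
  show ⁅y, z⁆ ∈ LieModule.lowerCentralSeries K g g 1
  rw [LieModule.lowerCentralSeries_succ, LieModule.lowerCentralSeries_zero]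
  exact LieSubmodule.lie_mem_lie (LieSubmodule.mem_top y) (LieSubmodule.mem_top z)

/-- If a nonzero Manin algebra `(g = U' ⊕ V', B')` is nilpotent, then the centre of `g`
intersects both `U'` and `V'` nontrivially. -/
theorem stmt_15 (K : Type*) [Field K] [CharZero K]
    (g : Type*) [LieRing g] [LieAlgebra K g] [Module.Finite K g] [Nontrivial g]
    (B' : LinearMap.BilinForm K g)
    (hBnd : B'.Nondegenerate)
    (hBsymm : ∀ x y : g, B' x y = B' y x)
    (hBinv : ∀ x y z : g, B' ⁅x, y⁆ z = B' x ⁅y, z⁆)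
    (U' V' : LieSubalgebra K g)
    (hUV' : IsCompl U'.toSubmodule V'.toSubmodule)
    (hU'iso : ∀ x ∈ U', ∀ y ∈ U', B' x y = 0)
    (hV'iso : ∀ x ∈ V', ∀ y ∈ V', B' x y = 0)
    (hnilp : LieRing.IsNilpotent g) :
    (∃ x : g, x ∈ LieAlgebra.center K g ∧ x ∈ U' ∧ x ≠ 0) ∧
    (∃ x : g, x ∈ LieAlgebra.center K g ∧ x ∈ V' ∧ x ≠ 0) := by
  constructor
  · exact stmt_15_aux K g B' hBnd hBsymm hBinv U' V' hUV' hU'iso hV'iso hnilp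
  · exact stmt_15_aux K g B' hBnd hBsymm hBinv V' U' hUV'.symm hV'iso hU'iso hnilp
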